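/- Fix p > 1 and integer N ≥ 1, and define h(x) := sin^p(πx) ∑_{k=N+1}^∞ (1/(k−x)^p + 1/(k+x−1)^p) for x ∈ (1/2, 1). Then h is twice differentiable at 1/2 (from the right, by symmetry), h'(1/2) = 0, and h''(1/2) = ∑_{k=N+1}^∞ [2p(p+1)/(k − 1/2)^{p+2} − 2pπ²/(k − 1/2)^p] = 2^{p+1} p (4(p+1)λ(p+2; N) − π²λ(p; N)). -/

import Mathlib

open Real

/-- The incomplete Lambda function `λ(s; a) = ∑_{n=1}^∞ (2(n+a)-1)^{-s}`. -/
noncomputable def lam (s a : ℝ) : ℝ := ∑' n : ℕ, 1 / (2 * ((n : ℝ) + 1 + a) - 1) ^ s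

set_option maxHeartbeats 1000000 in
lemma summable_half (q : ℝ) (hq : 1 < q) :
    Summable (fun k : ℕ => ((k : ℝ) + 1/2) ^ (-q)) := by
  have h1 : Summable (fun k : ℕ => ((k : ℝ) + 1) ^ (-q)) := by
    have := (Real.summable_nat_rpow (p := -q)).2 (by linarith)
    have := (summable_nat_add_iff (f := fun n : ℕ => ((n : ℝ)) ^ (-q)) 1).2 this
    simpa [Nat.cast_add] using this
  refine (h1.mul_left (2 ^ q)).of_nonneg_of_le (fun k => by positivity) ?_
  intro k
  have hk : (0:ℝ) < (k:ℝ) + 1/2 := by positivity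
  have hle : ((k : ℝ) + 1) / 2 ≤ (k : ℝ) + 1/2 := by
    have : (0:ℝ) ≤ (k:ℝ) := Nat.cast_nonneg k
    linarith
  have := Real.rpow_le_rpow_of_nonpos (by positivity) hle (neg_nonpos.2 (by linarith : (0:ℝ) ≤ q))
  calc ((k : ℝ) + 1/2) ^ (-q) ≤ (((k : ℝ) + 1)/2) ^ (-q) := this
    _ = 2 ^ q * ((k : ℝ) + 1) ^ (-q) := by
        rw [Real.div_rpow (by positivity) (by norm_num), Real.rpow_neg (by norm_num : (0:ℝ) ≤ 2)]
        field_simp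

lemma hder_sub (c q x : ℝ) (h : c - x ≠ 0) :
    HasDerivAt (fun y => (c - y) ^ (-q)) (q * (c - x) ^ (-(q+1))) x := by
  have h1 : HasDerivAt (fun y : ℝ => c - y) (-1) x := by
    simpa using (hasDerivAt_id x).const_sub c
  have := h1.rpow_const (p := -q) (Or.inl h)
  convert this using 1
  rw [show -q - 1 = -(q+1) by ring]; ring

lemma hder_add (c q x : ℝ) (h : c + x - 1 ≠ 0) :
    HasDerivAt (fun y => (c + y - 1) ^ (-q)) (-(q * (c + x - 1) ^ (-(q+1)))) x := by
  have h1 : HasDerivAt (fun y : ℝ => c + y - 1) 1 x := by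
    simpa using ((hasDerivAt_id x).const_add c).sub_const 1
  have := h1.rpow_const (p := -q) (Or.inl h)
  convert this using 1
  rw [show -q - 1 = -(q+1) by ring]; ring

set_option maxHeartbeats 4000000 in
theorem tail_second_deriv_at_half (p : ℝ) (hp : 1 < p) (N : ℕ) (hN : 1 ≤ N) :
    let h : ℝ → ℝ := fun x =>
      Real.sin (π * x) ^ p *
        ∑' k : ℕ, (1 / (((k : ℝ) + N + 1) - x) ^ p + 1 / (((k : ℝ) + N + 1) + x - 1) ^ p)
    HasDerivAt h 0 (1/2) ∧
    HasDerivAt (deriv h)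
      (∑' k : ℕ, (2 * p * (p + 1) / (((k : ℝ) + N + 1) - 1/2) ^ (p + 2)
        - 2 * p * π ^ 2 / (((k : ℝ) + N + 1) - 1/2) ^ p)) (1/2) ∧
    (∑' k : ℕ, (2 * p * (p + 1) / (((k : ℝ) + N + 1) - 1/2) ^ (p + 2)
        - 2 * p * π ^ 2 / (((k : ℝ) + N + 1) - 1/2) ^ p))
      = 2 ^ (p + 1) * p * (4 * (p + 1) * lam (p + 2) N - π ^ 2 * lam p N) := by
  intro h
  have hdef : h = fun x =>
      Real.sin (π * x) ^ p *
        ∑' k : ℕ, (1 / (((k : ℝ) + N + 1) - x) ^ p + 1 / (((k : ℝ) + N + 1) + x - 1) ^ p) := rfl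
  have hp0 : (0:ℝ) < p := by linarith
  have hN1 : (1:ℝ) ≤ (N:ℝ) := by exact_mod_cast hN
  set t : Set ℝ := Set.Ioo (0:ℝ) (3/2) with htdef
  have ht_open : IsOpen t := isOpen_Ioo
  have ht_conn : IsPreconnected t := isPreconnected_Ioo
  have hhalf : (1/2:ℝ) ∈ t := by constructor <;> norm_num
  -- base bounds
  have hkpos : ∀ k : ℕ, (0:ℝ) < (k:ℝ) + 1/2 := fun k => by positivity
  have hb1 : ∀ (k : ℕ), ∀ x ∈ t, (k:ℝ) + 1/2 ≤ (k:ℝ) + N + 1 - x := by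
    intro k x hx; have := hx.2; linarith [hx.2]
  have hb2 : ∀ (k : ℕ), ∀ x ∈ t, (k:ℝ) + 1/2 ≤ (k:ℝ) + N + 1 + x - 1 := by
    intro k x hx; have h0 := hx.1; linarith
  have hpos1 : ∀ (k : ℕ), ∀ x ∈ t, (0:ℝ) < (k:ℝ) + N + 1 - x :=
    fun k x hx => lt_of_lt_of_le (hkpos k) (hb1 k x hx)
  have hpos2 : ∀ (k : ℕ), ∀ x ∈ t, (0:ℝ) < (k:ℝ) + N + 1 + x - 1 :=
    fun k x hx => lt_of_lt_of_le (hkpos k) (hb2 k x hx)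
  -- the three levels of functions
  set F : ℕ → ℝ → ℝ := fun k x =>
    ((k:ℝ) + N + 1 - x) ^ (-p) + ((k:ℝ) + N + 1 + x - 1) ^ (-p) with hFdef
  set F1 : ℕ → ℝ → ℝ := fun k x =>
    p * ((k:ℝ) + N + 1 - x) ^ (-(p+1)) - p * ((k:ℝ) + N + 1 + x - 1) ^ (-(p+1)) with hF1def
  set F2 : ℕ → ℝ → ℝ := fun k x =>
    p * (p+1) * ((k:ℝ) + N + 1 - x) ^ (-(p+2))
      + p * (p+1) * ((k:ℝ) + N + 1 + x - 1) ^ (-(p+2)) with hF2def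
  -- derivatives of the terms
  have hFder : ∀ (k : ℕ), ∀ x ∈ t, HasDerivAt (F k) (F1 k x) x := by
    intro k x hx
    have h1 := hder_sub ((k:ℝ) + N + 1) p x (ne_of_gt (hpos1 k x hx))
    have h2 := hder_add ((k:ℝ) + N + 1) p x (ne_of_gt (hpos2 k x hx))
    have := h1.add h2
    simp only [hFdef, hF1def]
    exact this.congr_deriv (by ring)
  have hF1der : ∀ (k : ℕ), ∀ x ∈ t, HasDerivAt (F1 k) (F2 k x) x := by
    intro k x hx
    have h1 := (hder_sub ((k:ℝ) + N + 1) (p+1) x (ne_of_gt (hpos1 k x hx))).const_mul p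
    have h2 := (hder_add ((k:ℝ) + N + 1) (p+1) x (ne_of_gt (hpos2 k x hx))).const_mul p
    have := h1.sub h2
    simp only [hF1def, hF2def]
    exact this.congr_deriv (by rw [show -(p+2) = -(p+1+1) by ring]; ring)
  -- bounds
  have hrle1 : ∀ (q : ℝ), 0 ≤ q → ∀ (k : ℕ), ∀ x ∈ t,
      ((k:ℝ) + N + 1 - x) ^ (-q) ≤ ((k:ℝ) + 1/2) ^ (-q) :=
    fun q hq k x hx =>
      Real.rpow_le_rpow_of_nonpos (hkpos k) (hb1 k x hx) (neg_nonpos.2 hq)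
  have hrle2 : ∀ (q : ℝ), 0 ≤ q → ∀ (k : ℕ), ∀ x ∈ t,
      ((k:ℝ) + N + 1 + x - 1) ^ (-q) ≤ ((k:ℝ) + 1/2) ^ (-q) :=
    fun q hq k x hx =>
      Real.rpow_le_rpow_of_nonpos (hkpos k) (hb2 k x hx) (neg_nonpos.2 hq)
  have hFbd : ∀ (k : ℕ), ∀ x ∈ t, ‖F k x‖ ≤ 2 * ((k:ℝ) + 1/2) ^ (-p) := by
    intro k x hx
    have p1 := hrle1 p hp0.le k x hx
    have p2 := hrle2 p hp0.le k x hx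
    have n1 : (0:ℝ) ≤ ((k:ℝ) + N + 1 - x) ^ (-p) := Real.rpow_nonneg (hpos1 k x hx).le _
    have n2 : (0:ℝ) ≤ ((k:ℝ) + N + 1 + x - 1) ^ (-p) := Real.rpow_nonneg (hpos2 k x hx).le _
    simp only [hFdef, Real.norm_eq_abs]
    rw [abs_of_nonneg (by linarith)]
    linarith
  have hF1bd : ∀ (k : ℕ), ∀ x ∈ t, ‖F1 k x‖ ≤ 2 * p * ((k:ℝ) + 1/2) ^ (-(p+1)) := by
    intro k x hx
    have p1 := hrle1 (p+1) (by linarith) k x hx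
    have p2 := hrle2 (p+1) (by linarith) k x hx
    have n1 : (0:ℝ) ≤ ((k:ℝ) + N + 1 - x) ^ (-(p+1)) := Real.rpow_nonneg (hpos1 k x hx).le _
    have n2 : (0:ℝ) ≤ ((k:ℝ) + N + 1 + x - 1) ^ (-(p+1)) := Real.rpow_nonneg (hpos2 k x hx).le _
    simp only [hF1def, Real.norm_eq_abs]
    rw [abs_sub_le_iff]
    constructor <;> nlinarith [Real.rpow_nonneg (hkpos k).le (-(p+1))]
  have hF2bd : ∀ (k : ℕ), ∀ x ∈ t, ‖F2 k x‖ ≤ 2 * (p * (p+1)) * ((k:ℝ) + 1/2) ^ (-(p+2)) := by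
    intro k x hx
    have p1 := hrle1 (p+2) (by linarith) k x hx
    have p2 := hrle2 (p+2) (by linarith) k x hx
    have n1 : (0:ℝ) ≤ ((k:ℝ) + N + 1 - x) ^ (-(p+2)) := Real.rpow_nonneg (hpos1 k x hx).le _
    have n2 : (0:ℝ) ≤ ((k:ℝ) + N + 1 + x - 1) ^ (-(p+2)) := Real.rpow_nonneg (hpos2 k x hx).le _
    have c0 : (0:ℝ) ≤ p * (p+1) := by nlinarith
    have m1 := mul_le_mul_of_nonneg_left p1 c0
    have m2 := mul_le_mul_of_nonneg_left p2 c0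
    have n1' := mul_nonneg c0 n1
    have n2' := mul_nonneg c0 n2
    simp only [hF2def, Real.norm_eq_abs]
    rw [abs_of_nonneg (by linarith)]
    linarith
  -- summability
  have hsum_p : Summable (fun k : ℕ => ((k:ℝ) + 1/2) ^ (-p)) := summable_half p hp
  have hsum_p1 : Summable (fun k : ℕ => ((k:ℝ) + 1/2) ^ (-(p+1))) := summable_half _ (by linarith)
  have hsum_p2 : Summable (fun k : ℕ => ((k:ℝ) + 1/2) ^ (-(p+2))) := summable_half _ (by linarith)
  have hsumF0 : Summable (fun k : ℕ => F k (1/2)) :=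
    Summable.of_norm_bounded (hsum_p.mul_left 2) (fun k => hFbd k _ hhalf)
  have hF1zero : ∀ k : ℕ, F1 k (1/2) = 0 := by
    intro k
    simp only [hF1def]
    rw [show (k:ℝ) + N + 1 + 1/2 - 1 = (k:ℝ) + N + 1 - 1/2 by ring]
    ring
  have hsumF1half : Summable (fun k : ℕ => F1 k (1/2)) := by
    simp only [hF1zero]; exact summable_zero
  have hsumF2half : Summable (fun k : ℕ => F2 k (1/2)) :=
    Summable.of_norm_bounded (hsum_p2.mul_left (2 * (p * (p+1)))) (fun k => hF2bd k _ hhalf)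
  -- derivatives of the sums
  have hS : ∀ x ∈ t, HasDerivAt (fun y => ∑' k : ℕ, F k y) (∑' k : ℕ, F1 k x) x := by
    intro x hx
    exact hasDerivAt_tsum_of_isPreconnected (hsum_p1.mul_left (2*p)) ht_open ht_conn
      hFder (fun k y hy => hF1bd k y hy) hhalf hsumF0 hx
  have hS' : ∀ x ∈ t, HasDerivAt (fun y => ∑' k : ℕ, F1 k y) (∑' k : ℕ, F2 k x) x := by
    intro x hx
    exact hasDerivAt_tsum_of_isPreconnected (hsum_p2.mul_left (2*(p*(p+1)))) ht_open ht_conn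
      hF1der (fun k y hy => hF2bd k y hy) hhalf hsumF1half hx
  -- sine part
  have hsinlin : ∀ x : ℝ, HasDerivAt (fun y : ℝ => Real.sin (π * y)) (Real.cos (π * x) * π) x := by
    intro x
    have h1 : HasDerivAt (fun y : ℝ => π * y) π x := by simpa using (hasDerivAt_id x).const_mul π
    exact (Real.hasDerivAt_sin (π * x)).comp x h1
  have hgder : ∀ x : ℝ,
      HasDerivAt (fun y : ℝ => Real.sin (π * y) ^ p)
        (Real.cos (π * x) * π * p * Real.sin (π * x) ^ (p-1)) x :=
    fun x => (hsinlin x).rpow_const (Or.inr hp.le)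
  -- h agrees with the nice version on t
  set H : ℝ → ℝ := fun x => Real.sin (π * x) ^ p * ∑' k : ℕ, F k x with hHdef
  have hhH : ∀ x ∈ t, h x = H x := by
    intro x hx
    show Real.sin (π * x) ^ p *
        (∑' k : ℕ, (1 / (((k : ℝ) + N + 1) - x) ^ p + 1 / (((k : ℝ) + N + 1) + x - 1) ^ p))
      = Real.sin (π * x) ^ p * ∑' k : ℕ, F k x
    congr 1
    apply tsum_congr
    intro k
    simp only [hFdef]
    rw [Real.rpow_neg (hpos1 k x hx).le, Real.rpow_neg (hpos2 k x hx).le, one_div, one_div]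
  have hev : h =ᶠ[nhds (1/2:ℝ)] H := by
    filter_upwards [ht_open.mem_nhds hhalf] with x hx using hhH x hx
  have hsinhalf : Real.sin (π * (1/2:ℝ)) = 1 := by
    rw [show π * (1/2:ℝ) = π/2 by ring, Real.sin_pi_div_two]
  have hcoshalf : Real.cos (π * (1/2:ℝ)) = 0 := by
    rw [show π * (1/2:ℝ) = π/2 by ring, Real.cos_pi_div_two]
  have htsumF1 : (∑' k : ℕ, F1 k (1/2)) = 0 := by
    rw [show (fun k : ℕ => F1 k (1/2)) = fun _ => (0:ℝ) from funext hF1zero, tsum_zero]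
  -- first goal
  have goal1 : HasDerivAt h 0 (1/2) := by
    have H1 := (hgder (1/2)).mul (hS (1/2) hhalf)
    have H2 := H1.congr_of_eventuallyEq hev
    exact H2.congr_deriv (by rw [hcoshalf, htsumF1]; ring)
  -- the derivative function
  set D : ℝ → ℝ := fun x =>
    Real.cos (π * x) * π * p * Real.sin (π * x) ^ (p-1) * (∑' k : ℕ, F k x)
      + Real.sin (π * x) ^ p * (∑' k : ℕ, F1 k x) with hDdef
  have hderivh : deriv h =ᶠ[nhds (1/2:ℝ)] D := by
    filter_upwards [ht_open.mem_nhds hhalf] with x hx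
    have hevx : h =ᶠ[nhds x] H := by
      filter_upwards [ht_open.mem_nhds hx] with y hy using hhH y hy
    have hx1 : HasDerivAt h (D x) x :=
      (((hgder x).mul (hS x hx))).congr_of_eventuallyEq hevx
    exact hx1.deriv
  -- second derivative pieces at 1/2
  have hA : HasDerivAt (fun x : ℝ => Real.cos (π * x) * π * p * Real.sin (π * x) ^ (p-1))
      ((-Real.sin (π * (1/2:ℝ)) * π) * π * p * Real.sin (π * (1/2:ℝ)) ^ (p-1)
        + Real.cos (π * (1/2:ℝ)) * π * p
          * (Real.cos (π * (1/2:ℝ)) * π * (p-1) * Real.sin (π * (1/2:ℝ)) ^ (p-1-1))) (1/2) := by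
    have hc : HasDerivAt (fun y : ℝ => Real.cos (π * y)) (-Real.sin (π * (1/2:ℝ)) * π) (1/2) := by
      have h1 : HasDerivAt (fun y : ℝ => π * y) π (1/2:ℝ) := by
        simpa using (hasDerivAt_id (1/2:ℝ)).const_mul π
      exact (Real.hasDerivAt_cos (π * (1/2:ℝ))).comp _ h1
    have hcp : HasDerivAt (fun y : ℝ => Real.cos (π * y) * π * p)
        ((-Real.sin (π * (1/2:ℝ)) * π) * π * p) (1/2) := (hc.mul_const π).mul_const p
    have hspm : HasDerivAt (fun y : ℝ => Real.sin (π * y) ^ (p-1))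
        (Real.cos (π * (1/2:ℝ)) * π * (p-1) * Real.sin (π * (1/2:ℝ)) ^ (p-1-1)) (1/2) :=
      (hsinlin (1/2)).rpow_const (Or.inl (by rw [hsinhalf]; norm_num))
    exact hcp.mul hspm
  have hB := hgder (1/2)
  have hSd := hS (1/2) hhalf
  have hS1d := hS' (1/2) hhalf
  have hDder := (hA.mul hSd).add (hB.mul hS1d)
  -- identify the value
  have hc12 : ∀ k : ℕ, (0:ℝ) < (k:ℝ) + N + 1 - 1/2 := fun k => hpos1 k _ hhalf
  have hterm : ∀ k : ℕ,
      2 * p * (p + 1) / (((k : ℝ) + N + 1) - 1/2) ^ (p + 2)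
        - 2 * p * π ^ 2 / (((k : ℝ) + N + 1) - 1/2) ^ p
      = F2 k (1/2) - p * π ^ 2 * F k (1/2) := by
    intro k
    simp only [hFdef, hF2def]
    rw [show (k:ℝ) + N + 1 + 1/2 - 1 = (k:ℝ) + N + 1 - 1/2 by ring]
    rw [Real.rpow_neg (hc12 k).le, Real.rpow_neg (hc12 k).le]
    field_simp
    ring
  have hT : (∑' k : ℕ, (2 * p * (p + 1) / (((k : ℝ) + N + 1) - 1/2) ^ (p + 2)
        - 2 * p * π ^ 2 / (((k : ℝ) + N + 1) - 1/2) ^ p))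
      = (∑' k : ℕ, F2 k (1/2)) - p * π ^ 2 * (∑' k : ℕ, F k (1/2)) := by
    rw [← tsum_mul_left, ← Summable.tsum_sub hsumF2half (hsumF0.mul_left _)]
    exact tsum_congr hterm
  have goal2 : HasDerivAt (deriv h)
      (∑' k : ℕ, (2 * p * (p + 1) / (((k : ℝ) + N + 1) - 1/2) ^ (p + 2)
        - 2 * p * π ^ 2 / (((k : ℝ) + N + 1) - 1/2) ^ p)) (1/2) := by
    have H2 := hDder.congr_of_eventuallyEq hderivh
    exact H2.congr_deriv (by rw [hT]; simp only [hsinhalf, hcoshalf, Real.one_rpow, htsumF1]; ring)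
  refine ⟨goal1, goal2, ?_⟩
  -- the closed form
  have hck : ∀ k : ℕ, (0:ℝ) < (k:ℝ) + N + 1/2 := fun k => by positivity
  have hlam : ∀ q : ℝ, (∑' k : ℕ, ((k:ℝ) + N + 1/2) ^ (-q)) = 2 ^ q * lam q N := by
    intro q
    rw [lam, ← tsum_mul_left]
    apply tsum_congr
    intro k
    rw [show 2 * ((k:ℝ) + 1 + N) - 1 = 2 * ((k:ℝ) + N + 1/2) by ring]
    rw [Real.mul_rpow (by norm_num : (0:ℝ) ≤ 2) (hck k).le, Real.rpow_neg (hck k).le]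
    have h2q : (2:ℝ) ^ q ≠ 0 := ne_of_gt (Real.rpow_pos_of_pos two_pos q)
    have hcq : ((k:ℝ) + N + 1/2) ^ q ≠ 0 := ne_of_gt (Real.rpow_pos_of_pos (hck k) q)
    field_simp
  have hT2 : (∑' k : ℕ, F2 k (1/2)) = 2 * p * (p+1) * (2 ^ (p+2) * lam (p+2) N) := by
    have : (∑' k : ℕ, F2 k (1/2)) = ∑' k : ℕ, 2 * p * (p+1) * ((k:ℝ) + N + 1/2) ^ (-(p+2)) := by
      apply tsum_congr
      intro k
      simp only [hF2def]
      rw [show (k:ℝ) + N + 1 + 1/2 - 1 = (k:ℝ) + N + 1/2 by ring,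
        show (k:ℝ) + N + 1 - 1/2 = (k:ℝ) + N + 1/2 by ring]
      ring
    rw [this, tsum_mul_left, hlam (p+2)]
  have hT0 : (∑' k : ℕ, F k (1/2)) = 2 * (2 ^ p * lam p N) := by
    have : (∑' k : ℕ, F k (1/2)) = ∑' k : ℕ, 2 * ((k:ℝ) + N + 1/2) ^ (-p) := by
      apply tsum_congr
      intro k
      simp only [hFdef]
      rw [show (k:ℝ) + N + 1 + 1/2 - 1 = (k:ℝ) + N + 1/2 by ring,
        show (k:ℝ) + N + 1 - 1/2 = (k:ℝ) + N + 1/2 by ring]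
      ring
    rw [this, tsum_mul_left, hlam p]
  rw [hT, hT2, hT0]
  rw [show (p+2:ℝ) = p + 1 + 1 by ring, Real.rpow_add two_pos, Real.rpow_add two_pos,
    Real.rpow_one]
  ring
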